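/- Let X and Y be linear orders such that X is order-isomorphic to an initial segment (a downward-closed subset) of Y, and Y is order-isomorphic to a final segment (an upward-closed subset) of X. Then X and Y are order-isomorphic. -/

import Mathlib

/-- Lindenbaum's lemma: if `X` is order-isomorphic to an initial segment of `Y`
and `Y` is order-isomorphic to a final segment of `X`, then `X ≅ Y`. -/
theorem lindenbaum {X Y : Type*} [LinearOrder X] [LinearOrder Y]
    (S : Set Y) (hS : ∀ ⦃s y : Y⦄, s ∈ S → y ≤ s → y ∈ S)
    (T : Set X) (hT : ∀ ⦃t x : X⦄, t ∈ T → t ≤ x → x ∈ T)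
    (e : X ≃o S) (f : Y ≃o T) : Nonempty (X ≃o Y) := by
  classical
  set eY : X → Y := fun x => (e x : Y) with heY
  set fX : Y → X := fun y => (f y : X) with hfX
  have eY_strict : StrictMono eY := fun a b h => by
    simpa [heY, Subtype.coe_lt_coe] using e.strictMono h
  have fX_strict : StrictMono fX := fun a b h => by
    simpa [hfX, Subtype.coe_lt_coe] using f.strictMono h
  have eY_mem : ∀ x, eY x ∈ S := fun x => (e x).2
  have fX_mem : ∀ y, fX y ∈ T := fun y => (f y).2
  have eY_sur : ∀ y ∈ S, ∃ x, eY x = y := fun y hy =>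
    ⟨e.symm ⟨y, hy⟩, by simp [heY]⟩
  have fX_sur : ∀ x ∈ T, ∃ y, fX y = x := fun x hx =>
    ⟨f.symm ⟨x, hx⟩, by simp [hfX]⟩
  -- image of lower set under eY is lower
  have imgLower : ∀ A : Set X, IsLowerSet A → IsLowerSet (eY '' A) := by
    rintro A hA a b hba ⟨x, hxA, rfl⟩
    have hbS : b ∈ S := hS (eY_mem x) hba
    obtain ⟨z, rfl⟩ := eY_sur b hbS
    exact ⟨z, hA (eY_strict.le_iff_le.mp hba) hxA, rfl⟩
  have imgUpper : ∀ U : Set Y, IsUpperSet U → IsUpperSet (fX '' U) := by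
    rintro U hU a b hab ⟨y, hyU, rfl⟩
    have hbT : b ∈ T := hT (fX_mem y) hab
    obtain ⟨z, rfl⟩ := fX_sur b hbT
    exact ⟨z, hU (fX_strict.le_iff_le.mp hab) hyU, rfl⟩
  set Φ : Set X → Set X := fun A => (fX '' (eY '' A)ᶜ)ᶜ with hΦ
  have Φmono : ∀ A B : Set X, A ⊆ B → Φ A ⊆ Φ B := by
    intro A B h
    exact Set.compl_subset_compl.mpr (Set.image_mono
      (Set.compl_subset_compl.mpr (Set.image_mono h)))
  have Φlower : ∀ A : Set X, IsLowerSet A → IsLowerSet (Φ A) := by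
    intro A hA
    exact (imgUpper _ (imgLower A hA).compl).compl
  set C : Set (Set X) := {B | IsLowerSet B ∧ B ⊆ Φ B} with hC
  set A : Set X := ⋃₀ C with hA
  have Alower : IsLowerSet A := isLowerSet_sUnion (fun B hB => hB.1)
  have hsub : A ⊆ Φ A := by
    intro x hx
    obtain ⟨B, hB, hxB⟩ := hx
    exact Φmono B A (Set.subset_sUnion_of_mem hB) (hB.2 hxB)
  have hfix : A = Φ A := by
    refine subset_antisymm hsub ?_
    exact Set.subset_sUnion_of_mem ⟨Φlower A Alower, Φmono _ _ hsub⟩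
  have hcompl : Aᶜ = fX '' (eY '' A)ᶜ := by
    conv_lhs => rw [hfix, hΦ]
    simp
  have memT : ∀ x, x ∉ A → x ∈ T := by
    intro x hx
    have : x ∈ fX '' (eY '' A)ᶜ := hcompl ▸ hx
    obtain ⟨y, _, rfl⟩ := this
    exact fX_mem y
  set g : X → Y := fun x => if h : x ∈ A then eY x else (f.symm ⟨x, memT x h⟩ : Y)
    with hg
  have gcompl : ∀ x (h : x ∉ A), g x ∉ eY '' A := by
    intro x h hmem
    have hx : x ∈ fX '' (eY '' A)ᶜ := hcompl ▸ h
    obtain ⟨y, hy, hyx⟩ := hx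
    have : g x = y := by
      simp only [hg, dif_neg h]
      have : (⟨x, memT x h⟩ : T) = f y := by ext; simp [← hyx, hfX]
      rw [this, f.symm_apply_apply]
    exact hy (this ▸ hmem)
  have gmono : StrictMono g := by
    intro x1 x2 hlt
    by_cases h1 : x1 ∈ A
    · by_cases h2 : x2 ∈ A
      · simp only [hg, dif_pos h1, dif_pos h2]; exact eY_strict hlt
      · have hm1 : g x1 ∈ eY '' A := by
          simp only [hg, dif_pos h1]; exact ⟨x1, h1, rfl⟩
        have hm2 := gcompl x2 h2
        by_contra hle
        push_neg at hle
        exact hm2 ((imgLower A Alower) hle hm1)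
    · have h2 : x2 ∉ A := fun h2 => h1 (Alower hlt.le h2)
      simp only [hg, dif_neg h1, dif_neg h2, Subtype.coe_lt_coe]
      exact f.symm.strictMono (by exact_mod_cast hlt)
  have gsurj : Function.Surjective g := by
    intro y
    by_cases hy : y ∈ eY '' A
    · obtain ⟨x, hx, rfl⟩ := hy
      exact ⟨x, by simp [hg, dif_pos hx]⟩
    · have hx : fX y ∈ Aᶜ := hcompl ▸ ⟨y, hy, rfl⟩
      refine ⟨fX y, ?_⟩
      simp only [hg, dif_neg hx]
      have : (⟨fX y, memT _ hx⟩ : T) = f y := by ext; simp [hfX]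
      rw [this, f.symm_apply_apply]
  exact ⟨StrictMono.orderIsoOfSurjective g gmono gsurj⟩
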